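/- Let $\psi : (0,\infty) \to \mathbb{R}$ be continuously differentiable with $e^{-\psi}$ a probability density, and suppose $\beta \geq 1$ satisfies $\psi'(y) \geq \beta y$ for all $y \geq \beta$. Then $\int_{2\beta}^\infty |\log y|\, e^{-\psi(y)}\,dy \leq \beta^{-2}$. -/

import Mathlib

open MeasureTheory Set

/-- If `e^{-ψ}` is a probability density on `(0,∞)`, `ψ` is continuously differentiable there,
`β ≥ 1`, and `ψ'(y) ≥ β y` for `y ≥ β`, then `∫_{2β}^∞ |log y| e^{-ψ(y)} dy ≤ β⁻²`. -/
theorem stmt_1 (ψ : ℝ → ℝ) (β : ℝ) (hβ : 1 ≤ β)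
    (hsmooth : ContDiffOn ℝ 1 ψ (Ioi 0))
    (hdens : ∫ y in Ioi (0 : ℝ), Real.exp (-ψ y) = 1)
    (hderiv : ∀ y : ℝ, β ≤ y → β * y ≤ deriv ψ y) :
    ∫ y in Ioi (2 * β), |Real.log y| * Real.exp (-ψ y) ≤ β⁻¹ ^ 2 := by
  have hβpos : (0:ℝ) < β := lt_of_lt_of_le one_pos hβ
  have hdiff : ∀ y ∈ Ioi (0:ℝ), DifferentiableAt ℝ ψ y := fun y hy =>
    (hsmooth.contDiffAt (isOpen_Ioi.mem_nhds hy)).differentiableAt one_ne_zero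
  have hcont : ContinuousOn ψ (Ioi 0) := hsmooth.continuousOn
  -- integrability of the density
  have hInt : IntegrableOn (fun y => Real.exp (-ψ y)) (Ioi 0) := by
    by_contra h
    rw [MeasureTheory.integral_undef h] at hdens
    norm_num at hdens
  -- ψ is monotone on [β, 2β]
  have hmono : MonotoneOn ψ (Icc β (2*β)) := by
    apply monotoneOn_of_deriv_nonneg (convex_Icc _ _)
    · exact hcont.mono (fun y hy => lt_of_lt_of_le hβpos hy.1)
    · intro y hy
      rw [interior_Icc] at hy
      exact (hdiff y (lt_of_lt_of_le hβpos hy.1.le)).differentiableWithinAt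
    · intro y hy
      rw [interior_Icc] at hy
      have := hderiv y hy.1.le
      nlinarith [hy.1]
  -- step 1 : e^{-ψ(2β)} ≤ β⁻¹
  have hc : Real.exp (-ψ (2*β)) ≤ β⁻¹ := by
    have h1 : β * Real.exp (-ψ (2*β)) ≤ ∫ y in Ioc β (2*β), Real.exp (-ψ y) := by
      have hconst : ∫ _y in Ioc β (2*β), Real.exp (-ψ (2*β)) = β * Real.exp (-ψ (2*β)) := by
        rw [setIntegral_const, measureReal_def, Real.volume_Ioc, smul_eq_mul]
        rw [ENNReal.toReal_ofReal (by linarith)]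
        ring_nf
      rw [← hconst]
      apply setIntegral_mono_on
      · exact integrableOn_const (by rw [Real.volume_Ioc]; exact ENNReal.ofReal_ne_top)
      · exact hInt.mono_set (fun y hy => lt_of_lt_of_le hβpos hy.1.le)
      · exact measurableSet_Ioc
      · intro y hy
        apply Real.exp_le_exp.mpr
        simp only [neg_le_neg_iff]
        exact hmono ⟨hy.1.le, hy.2⟩ ⟨by linarith, le_rfl⟩ hy.2
    have h2 : ∫ y in Ioc β (2*β), Real.exp (-ψ y) ≤ ∫ y in Ioi (0:ℝ), Real.exp (-ψ y) := by
      apply setIntegral_mono_set hInt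
      · exact ae_of_all _ fun y => (Real.exp_pos _).le
      · exact HasSubset.Subset.eventuallyLE (fun y hy => lt_of_lt_of_le hβpos hy.1.le)
    rw [hdens] at h2
    have : β * Real.exp (-ψ (2*β)) ≤ 1 := le_trans h1 h2
    rw [← mul_inv_cancel₀ (ne_of_gt hβpos)] at this
    exact le_of_mul_le_mul_left this hβpos
  -- the comparison function
  set g : ℝ → ℝ := fun y => Real.exp (-ψ (2*β)) * (y * Real.exp (2*β^3 - β/2 * y^2)) with hg
  -- antitonicity of φ
  have hφ : AntitoneOn (fun y => β/2 * y^2 - ψ y) (Ici (2*β)) := by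
    apply antitoneOn_of_deriv_nonpos (convex_Ici _)
    · apply ContinuousOn.sub
      · exact (continuous_const.mul (continuous_pow 2)).continuousOn
      · exact hcont.mono (fun y hy => lt_of_lt_of_le (by linarith : (0:ℝ) < 2*β) hy)
    · intro y hy
      rw [interior_Ici] at hy
      have hy0 : (0:ℝ) < y := lt_of_le_of_lt (by linarith) hy
      exact ((differentiableAt_pow 2).const_mul _ |>.sub (hdiff y hy0)).differentiableWithinAt
    · intro y hy
      rw [interior_Ici] at hy
      have hy0 : (0:ℝ) < y := lt_of_le_of_lt (by linarith) hy
      have hd : HasDerivAt (fun y => β/2 * y^2 - ψ y) (β/2 * (2*y^1) - deriv ψ y) y :=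
        ((hasDerivAt_pow 2 y).const_mul (β/2)).sub (hdiff y hy0).hasDerivAt
      rw [hd.deriv]
      have hy' : 2*β < y := hy
      have := hderiv y (by linarith)
      nlinarith
  -- pointwise bound
  have hpt : ∀ y ∈ Ioi (2*β), |Real.log y| * Real.exp (-ψ y) ≤ g y := by
    intro y hy
    have hy2 : 2*β ≤ y := le_of_lt hy
    have hy1 : (1:ℝ) ≤ y := by linarith
    have hlog : |Real.log y| ≤ y := by
      rw [abs_of_nonneg (Real.log_nonneg hy1)]
      have := Real.log_le_sub_one_of_pos (by linarith : (0:ℝ) < y)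
      linarith
    have hexp : Real.exp (-ψ y) ≤ Real.exp (-ψ (2*β)) * Real.exp (2*β^3 - β/2 * y^2) := by
      rw [← Real.exp_add]
      apply Real.exp_le_exp.mpr
      have := hφ (self_mem_Ici) hy2 hy2
      nlinarith
    calc |Real.log y| * Real.exp (-ψ y) ≤ y * (Real.exp (-ψ (2*β)) * Real.exp (2*β^3 - β/2 * y^2)) := by
          apply mul_le_mul hlog hexp (Real.exp_pos _).le (by linarith)
      _ = g y := by rw [hg]; ring
  -- antiderivative of g
  set F : ℝ → ℝ := fun y => Real.exp (-ψ (2*β)) * (-(1/β) * Real.exp (2*β^3 - β/2 * y^2)) with hF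
  have hFd : ∀ y ∈ Ici (2*β), HasDerivAt F (g y) y := by
    intro y _
    have h1 : HasDerivAt (fun y : ℝ => 2*β^3 - β/2 * y^2) (-(β/2 * (2*y^1))) y :=
      (((hasDerivAt_pow 2 y).const_mul (β/2)).const_sub _)
    have h2 : HasDerivAt (fun y => Real.exp (2*β^3 - β/2 * y^2))
        (Real.exp (2*β^3 - β/2 * y^2) * (-(β/2 * (2*y^1)))) y := h1.exp
    have h3 := (h2.const_mul (-(1/β))).const_mul (Real.exp (-ψ (2*β)))
    refine h3.congr_deriv ?_
    rw [hg]
    field_simp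
  have hFtend : Filter.Tendsto F Filter.atTop (nhds 0) := by
    have harg : Filter.Tendsto (fun y : ℝ => 2*β^3 - β/2 * y^2) Filter.atTop Filter.atBot := by
      apply Filter.tendsto_atBot_add_const_left _ (2*β^3)
      exact Filter.tendsto_neg_atTop_atBot.comp
        (Filter.Tendsto.const_mul_atTop (by positivity) (Filter.tendsto_pow_atTop two_ne_zero))
    have := Real.tendsto_exp_atBot.comp harg
    have h2 := this.const_mul (Real.exp (-ψ (2*β)) * (-(1/β)))
    simp only [mul_zero] at h2
    refine h2.congr fun y => ?_
    simp only [hF, Function.comp_apply]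
    ring
  have hgpos : ∀ y ∈ Ioi (2*β), 0 ≤ g y := fun y hy => by
    have hy0 : (0:ℝ) < y := lt_of_le_of_lt (by linarith) hy
    rw [hg]; positivity
  have hgint : IntegrableOn g (Ioi (2*β)) :=
    integrableOn_Ioi_deriv_of_nonneg' hFd hgpos hFtend
  have hgval : ∫ y in Ioi (2*β), g y = 0 - F (2*β) :=
    integral_Ioi_of_hasDerivAt_of_nonneg' hFd hgpos hFtend
  have hFval : F (2*β) = -(β⁻¹ * Real.exp (-ψ (2*β))) := by
    simp only [hF]
    have : 2*β^3 - β/2 * (2*β)^2 = 0 := by ring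
    rw [this, Real.exp_zero]
    field_simp
  -- conclude
  have hmain : ∫ y in Ioi (2*β), |Real.log y| * Real.exp (-ψ y) ≤ ∫ y in Ioi (2*β), g y := by
    apply integral_mono_of_nonneg
    · exact (ae_restrict_iff' measurableSet_Ioi).mpr (ae_of_all _ fun y hy =>
        mul_nonneg (abs_nonneg _) (Real.exp_pos _).le)
    · exact hgint
    · exact (ae_restrict_iff' measurableSet_Ioi).mpr (ae_of_all _ hpt)
  rw [hgval, hFval] at hmain
  have : β⁻¹ * Real.exp (-ψ (2*β)) ≤ β⁻¹ * β⁻¹ :=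
    mul_le_mul_of_nonneg_left hc (by positivity)
  calc ∫ y in Ioi (2*β), |Real.log y| * Real.exp (-ψ y)
      ≤ 0 - -(β⁻¹ * Real.exp (-ψ (2*β))) := hmain
    _ = β⁻¹ * Real.exp (-ψ (2*β)) := by ring
    _ ≤ β⁻¹ ^ 2 := by rw [sq]; exact this
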